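/- Tarski's axiom system (R1)-(R10) for relation algebras is equivalent to the system S consisting of (R1)-(R6), both distributive laws (R8) and (R8'), and (R10); in particular, the second involution law (R7) and the distributive law for converse (R9) are derivable from (R1)-(R6), (R8), (R8'), and (R10). -/
import Mathlib

theorem hunt_main {A : Type*} (add : A → A → A) (compl : A → A)
    (hC : ∀ r s : A, add r s = add s r)
    (hA : ∀ r s t : A, add r (add s t) = add (add r s) t)
    (hH : ∀ r s : A, add (compl (add (compl r) s)) (compl (add (compl r) (compl s))) = r) :
    (∀ x : A, compl (compl x) = x) ∧ (∀ x : A, add x x = x) ∧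
    (∀ x y : A, add (compl (add x y)) (compl x) = compl x) := by
  have hC : ∀ x y : A, add x y = add y x := hC
  have hA : ∀ x y z : A, add x (add y z) = add (add x y) z := hA
  have hH : ∀ x y : A, add (compl (add (compl x) y)) (compl (add (compl x) (compl y))) = x := hH
  have E9 : ∀ x0 x1 x2 : A, (add x0 (add x1 x2)) = (add x1 (add x2 x0)) := by
    intro x0 x1 x2
    apply Eq.symm
    conv_lhs => rw [hA x1 x2 x0]
    conv_lhs => rw [hC (add x1 x2) x0]
  have E10 : ∀ x0 x1 : A, (add (compl (add (compl x0) x1)) (compl (add (compl x1) (compl x0)))) = x0 := by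
    intro x0 x1
    apply Eq.symm
    conv_lhs => rw [← hH x0 x1]
    conv_lhs => enter [2,1]; rw [hC (compl x0) (compl x1)]
  have E8 : ∀ x0 x1 x2 : A, (add (compl (add (compl x0) (compl x1))) (add x2 (compl (add (compl x1) x0)))) = (add x2 x1) := by
    intro x0 x1 x2
    conv_lhs => rw [E9 (compl (add (compl x0) (compl x1))) x2 (compl (add (compl x1) x0))]
    conv_lhs => enter [2]; rw [E10 x1 x0]
  have E14 : ∀ x0 x1 x2 : A, (add (compl (add (compl x0) x1)) (add (compl (add (compl x0) (compl x1))) x2)) = (add x0 x2) := by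
    intro x0 x1 x2
    conv_lhs => rw [hA (compl (add (compl x0) x1)) (compl (add (compl x0) (compl x1))) x2]
    conv_lhs => enter [1]; rw [hH x0 x1]
  have E15 : ∀ x0 x1 : A, (add (compl (add x0 (compl x1))) (compl (add (compl x1) (compl x0)))) = x1 := by
    intro x0 x1
    apply Eq.symm
    conv_lhs => rw [← hH x1 x0]
    conv_lhs => enter [1,1]; rw [hC (compl x1) x0]
  have E13 : ∀ x0 x1 : A, (add x0 (compl (add (compl x1) (compl (compl x0))))) = (add (compl (add (compl x0) x1)) x1) := by
    intro x0 x1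
    conv_lhs => rw [← E14 x0 x1 (compl (add (compl x1) (compl (compl x0))))]
    conv_lhs => enter [2]; rw [E15 (compl x0) x1]
  have E21 : ∀ x0 x1 : A, (add (compl (add (compl x0) (compl x1))) (compl (add (compl x0) x1))) = x0 := by
    intro x0 x1
    apply Eq.symm
    conv_lhs => rw [← hH x0 x1]
    conv_lhs => rw [hC (compl (add (compl x0) x1)) (compl (add (compl x0) (compl x1)))]
  have E20 : ∀ x0 x1 : A, (add (compl (add (compl x0) (compl x1))) (compl (add (compl x1) x0))) = x1 := by
    intro x0 x1
    apply Eq.symm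
    conv_lhs => rw [← E21 x1 x0]
    conv_lhs => enter [1,1]; rw [hC (compl x1) (compl x0)]
  have E19 : ∀ x0 x1 : A, (add (compl (add (compl x0) (compl x1))) (compl (add x0 (compl x1)))) = x1 := by
    intro x0 x1
    apply Eq.symm
    conv_lhs => rw [← E20 x0 x1]
    conv_lhs => enter [2,1]; rw [hC (compl x1) x0]
  have E18 : ∀ x0 x1 : A, (add x0 (compl (add x0 (compl x1)))) = (add (compl (add (compl x0) x1)) x1) := by
    intro x0 x1
    conv_lhs => rw [← E14 x0 x1 (compl (add x0 (compl x1)))]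
    conv_lhs => enter [2]; rw [E19 x0 x1]
  have E17 : ∀ x0 x1 : A, (add x0 (compl (add x0 (compl x1)))) = (add x1 (compl (add (compl x0) x1))) := by
    intro x0 x1
    conv_lhs => rw [E18 x0 x1]
    conv_lhs => rw [hC (compl (add (compl x0) x1)) x1]
  have E16 : ∀ x0 x1 : A, (add x0 (compl (add (compl x1) x0))) = (add (compl (add (compl x1) x0)) x0) := by
    intro x0 x1
    conv_lhs => rw [← E17 x1 x0]
    conv_lhs => rw [E18 x1 x0]
  have E12 : ∀ x0 x1 : A, (add x0 (compl (add (compl x1) (compl (compl x0))))) = (add x1 (compl (add (compl x0) x1))) := by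
    intro x0 x1
    conv_lhs => rw [E13 x0 x1]
    conv_lhs => rw [← E16 x1 x0]
  have E11 : ∀ x0 x1 : A, (add x0 (compl (add (compl x1) (compl (compl x0))))) = (add x1 (compl (add x1 (compl x0)))) := by
    intro x0 x1
    conv_lhs => rw [E12 x0 x1]
    conv_lhs => enter [2,1]; rw [hC (compl x0) x1]
  have E23 : ∀ x0 x1 x2 : A, (add x0 (add x1 x2)) = (add x1 (add x0 x2)) := by
    intro x0 x1 x2
    apply Eq.symm
    conv_lhs => rw [hA x1 x0 x2]
    conv_lhs => enter [1]; rw [hC x1 x0]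
    conv_lhs => rw [← hA x0 x1 x2]
  have E22 : ∀ x0 x1 x2 : A, (add (compl (add (compl x0) x1)) (add x2 (compl (add (compl x0) (compl x1))))) = (add x2 x0) := by
    intro x0 x1 x2
    conv_lhs => rw [E23 (compl (add (compl x0) x1)) x2 (compl (add (compl x0) (compl x1)))]
    conv_lhs => enter [2]; rw [hH x0 x1]
  have E7 : ∀ x0 : A, (add x0 (compl x0)) = (add (compl x0) x0) := by
    intro x0
    apply Eq.symm
    conv_lhs => rw [← E8 (compl x0) x0 (compl x0)]
    conv_lhs => enter [2]; rw [← E11 x0 (compl x0)]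
    conv_lhs => rw [E22 (compl x0) (compl x0) x0]
  have E26 : ∀ x0 x1 : A, (add (compl (add (compl x0) (compl (compl x1)))) x1) = (add x0 (compl (add (compl x1) x0))) := by
    intro x0 x1
    apply Eq.symm
    conv_lhs => rw [← E12 x1 x0]
    conv_lhs => rw [hC x1 (compl (add (compl x0) (compl (compl x1))))]
  have E25 : ∀ x0 x1 : A, (add (compl (add (compl x0) (compl (compl x1)))) x1) = (add x0 (compl (add x0 (compl x1)))) := by
    intro x0 x1
    conv_lhs => rw [E26 x0 x1]
    conv_lhs => enter [2,1]; rw [hC (compl x1) x0]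
  have E27 : ∀ x0 x1 x2 : A, (add (compl (add (compl x0) x1)) (add (compl (add (compl x1) (compl x0))) x2)) = (add x0 x2) := by
    intro x0 x1 x2
    conv_lhs => rw [hA (compl (add (compl x0) x1)) (compl (add (compl x1) (compl x0))) x2]
    conv_lhs => enter [1]; rw [E10 x0 x1]
  have E24 : ∀ x0 x1 : A, (add (compl x0) x0) = (add (compl x1) x1) := by
    intro x0 x1
    conv_lhs => rw [← E8 (compl x1) x0 (compl x0)]
    conv_lhs => enter [2]; rw [← E25 (compl x0) x1]
    conv_lhs => rw [E27 (compl x1) (compl x0) x1]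
  have E6 : ∀ x0 x1 : A, (add x0 (compl x0)) = (add x1 (compl x1)) := by
    intro x0 x1
    conv_lhs => rw [E7 x0]
    conv_lhs => rw [E24 x0 x1]
    conv_lhs => rw [← E7 x1]
  have E30 : ∀ x0 x1 : A, (add x0 (compl (add (compl x1) x0))) = (add (compl (add (compl x0) x1)) x1) := by
    intro x0 x1
    apply Eq.symm
    conv_lhs => rw [← E18 x0 x1]
    conv_lhs => enter [2,1]; rw [hC x0 (compl x1)]
  have E29 : ∀ x0 x1 : A, (add x0 (compl (add x0 (compl x1)))) = (add x0 (compl (add (compl x1) x0))) := by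
    intro x0 x1
    apply Eq.symm
    conv_lhs => rw [E30 x0 x1]
    conv_lhs => rw [← E18 x0 x1]
  have E34 : ∀ x0 x1 x2 : A, (add x0 (add x1 x2)) = (add x2 (add x0 x1)) := by
    intro x0 x1 x2
    conv_lhs => rw [hA x0 x1 x2]
    conv_lhs => rw [hC (add x0 x1) x2]
  have E33 : ∀ x0 x1 : A, (add x0 (add x0 x1)) = (add x0 (add x1 x0)) := by
    intro x0 x1
    apply Eq.symm
    conv_lhs => rw [← E34 x1 x0 x0]
    conv_lhs => rw [E9 x1 x0 x0]
  have E32 : ∀ x0 x1 : A, (add x0 (compl (add (compl x0) x1))) = (add (compl (add (compl x0) x1)) x0) := by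
    intro x0 x1
    conv_lhs => rw [← E14 x0 x1 (compl (add (compl x0) x1))]
    conv_lhs => rw [← E33 (compl (add (compl x0) x1)) (compl (add (compl x0) (compl x1)))]
    conv_lhs => enter [2]; rw [hH x0 x1]
  have E31 : ∀ x0 x1 : A, (add x0 (compl (add (compl x0) x1))) = (add (compl (add x1 (compl x0))) x0) := by
    intro x0 x1
    conv_lhs => rw [E32 x0 x1]
    conv_lhs => enter [1,1]; rw [hC (compl x0) x1]
  have E28 : ∀ x0 x1 : A, (add (compl x0) (compl x1)) = (add (compl x1) (compl x0)) := by
    intro x0 x1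
    apply Eq.symm
    conv_lhs => rw [← E20 x0 (add (compl x1) (compl x0))]
    conv_lhs => enter [1,1]; rw [← E29 (compl x0) x1]
    conv_lhs => enter [2,1]; rw [← E31 x0 (compl x1)]
    conv_lhs => rw [E19 x0 (add (compl x0) (compl x1))]
  have E36 : ∀ x0 : A, (add x0 (compl (add x0 (compl x0)))) = (add x0 (compl (add (compl x0) x0))) := by
    intro x0
    conv_lhs => rw [E18 x0 x0]
    conv_lhs => rw [← E32 x0 x0]
  have E37 : ∀ x0 x1 : A, (add (compl (add x0 (compl x1))) (compl (add (compl x0) (compl x1)))) = x1 := by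
    intro x0 x1
    apply Eq.symm
    conv_lhs => rw [← E15 x0 x1]
    conv_lhs => enter [2,1]; rw [hC (compl x1) (compl x0)]
  have E35 : ∀ x0 : A, (add (compl x0) (compl (compl x0))) = (add (compl (compl x0)) (compl x0)) := by
    intro x0
    apply Eq.symm
    conv_lhs => rw [← E10 (add (compl (compl x0)) (compl x0)) x0]
    conv_lhs => enter [2,1]; rw [← E36 (compl x0)]
    conv_lhs => enter [1,1]; rw [← E31 x0 (compl (compl x0))]
    conv_lhs => rw [E37 x0 (add (compl x0) (compl (compl x0)))]
  have E5 : ∀ x0 : A, (add (compl x0) (compl (compl x0))) = (add x0 (compl x0)) := by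
    intro x0
    apply Eq.symm
    conv_lhs => rw [E6 x0 (compl x0)]
  have E39 : ∀ x0 x1 x2 : A, (add x0 (add x1 (compl (add x0 x1)))) = (add x2 (compl x2)) := by
    intro x0 x1 x2
    apply Eq.symm
    conv_lhs => rw [E6 x2 (add x0 x1)]
    conv_lhs => rw [← hA x0 x1 (compl (add x0 x1))]
  have E38 : ∀ x0 x1 : A, (add x0 (add x1 (compl (add x0 x1)))) = (add x0 (compl x0)) := by
    intro x0 x1
    conv_lhs => rw [E39 x0 x1 x0]
  have E43 : ∀ x0 x1 x2 : A, (add x0 (add (compl (add x1 x0)) x1)) = (add x2 (compl x2)) := by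
    intro x0 x1 x2
    apply Eq.symm
    conv_lhs => rw [← E39 x1 x0 x2]
    conv_lhs => rw [hC x1 (add x0 (compl (add x1 x0)))]
    conv_lhs => rw [← hA x0 (compl (add x1 x0)) x1]
  have E42 : ∀ x0 x1 : A, (add x0 (add (compl (add x1 x0)) x1)) = (add x0 (compl x0)) := by
    intro x0 x1
    conv_lhs => rw [E43 x0 x1 (compl x0)]
    conv_lhs => rw [E28 x0 (compl x0)]
    conv_lhs => rw [← E35 x0]
    conv_lhs => rw [E5 x0]
  have E45 : ∀ x0 x1 : A, (add x0 (add x1 x1)) = (add x1 (add x0 x1)) := by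
    intro x0 x1
    apply Eq.symm
    conv_lhs => rw [← E9 x1 x1 x0]
    conv_lhs => rw [← E9 x0 x1 x1]
  have E44 : ∀ x0 x1 : A, (add (compl x0) (add (compl x1) (compl x1))) = (add (compl x1) (add (compl x1) (compl x0))) := by
    intro x0 x1
    conv_lhs => rw [E45 (compl x0) (compl x1)]
    conv_lhs => enter [2]; rw [E28 x0 x1]
  have E47 : ∀ x0 x1 x2 : A, (add x0 (add (compl x1) (compl x2))) = (add (compl x2) (add x0 (compl x1))) := by
    intro x0 x1 x2
    apply Eq.symm
    conv_lhs => rw [E23 (compl x2) x0 (compl x1)]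
    conv_lhs => enter [2]; rw [E28 x2 x1]
  have E49 : ∀ x0 x1 : A, (add (compl x0) (add x1 (compl x0))) = (add (compl x0) (add (compl x0) x1)) := by
    intro x0 x1
    conv_lhs => enter [2,2,1]; rw [← hH x0 x1]
    conv_lhs => rw [hA (compl x0) x1 (compl (add (compl (add (compl x0) x1)) (compl (add (compl x0) (compl x1)))))]
    conv_lhs => rw [E32 (add (compl x0) x1) (compl (add (compl x0) (compl x1)))]
    conv_lhs => enter [1,1]; rw [hH x0 x1]
  have E48 : ∀ x0 x1 : A, (add x0 (add (compl x1) (compl x1))) = (add (compl x1) (add (compl x1) x0)) := by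
    intro x0 x1
    apply Eq.symm
    conv_lhs => rw [← E49 x1 x0]
    conv_lhs => rw [hC (compl x1) (add x0 (compl x1))]
    conv_lhs => rw [← hA x0 (compl x1) (compl x1)]
  have E46 : ∀ x0 : A, (add (compl x0) (add x0 (compl x0))) = (add (compl x0) (add (compl x0) x0)) := by
    intro x0
    conv_lhs => rw [← E47 x0 x0 x0]
    conv_lhs => rw [E48 x0 x0]
  have E51 : ∀ x0 x1 : A, (add x0 (compl x1)) = (add (compl x1) x0) := by
    intro x0 x1
    conv_lhs => rw [← E14 x0 x0 (compl x1)]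
    conv_lhs => rw [E47 (compl (add (compl x0) x0)) (add (compl x0) (compl x0)) x1]
    conv_lhs => enter [2]; rw [hH x0 x0]
  have E50 : ∀ x0 : A, (add x0 (add (compl x0) (compl x0))) = (add (compl x0) (add x0 (compl x0))) := by
    intro x0
    conv_lhs => rw [E48 x0 x0]
    conv_lhs => enter [2]; rw [← E51 x0 x0]
  have E41 : ∀ x0 : A, (add x0 (add (compl x0) (compl x0))) = (add x0 (compl x0)) := by
    intro x0
    apply Eq.symm
    conv_lhs => rw [← E5 x0]
    conv_lhs => rw [← E38 (compl x0) (compl x0)]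
    conv_lhs => rw [hA (compl x0) (compl x0) (compl (add (compl x0) (compl x0)))]
    conv_lhs => rw [← E42 (add (compl x0) (compl x0)) (compl (add (compl x0) (compl x0)))]
    conv_lhs => enter [2,1,1]; rw [E44 (add (compl x0) (compl x0)) x0]
    conv_lhs => rw [← hA (compl x0) (compl x0) (add (compl (add (compl x0) (add (compl x0) (compl (add (compl x0) (compl x0)))))) (compl (add (compl x0) (compl x0))))]
    conv_lhs => enter [2,2,1,1]; rw [E38 (compl x0) (compl x0)]
    conv_lhs => enter [2,2]; rw [E21 x0 (compl x0)]
    conv_lhs => rw [← E46 x0]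
    conv_lhs => rw [← E50 x0]
  have E52 : ∀ x0 x1 x2 : A, (add x0 (add (compl x0) x1)) = (add x2 (add (compl x2) x1)) := by
    intro x0 x1 x2
    conv_lhs => rw [hA x0 (compl x0) x1]
    conv_lhs => enter [1]; rw [E6 x0 x2]
    conv_lhs => rw [← hA x2 (compl x2) x1]
  have E40 : ∀ x0 x1 : A, (add x0 (add (compl x0) (compl x1))) = (add x1 (compl x1)) := by
    intro x0 x1
    apply Eq.symm
    conv_lhs => rw [← E41 x1]
    conv_lhs => rw [E52 x1 (compl x1) x0]
  have E56 : ∀ x0 x1 x2 : A, (add x0 (add x1 x2)) = (add x2 (add x1 x0)) := by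
    intro x0 x1 x2
    apply Eq.symm
    conv_lhs => rw [← E9 x0 x2 x1]
    conv_lhs => enter [2]; rw [hC x2 x1]
  have E55 : ∀ x0 x1 x2 : A, (add x0 (add x1 (compl x2))) = (add x1 (add x0 (compl x2))) := by
    intro x0 x1 x2
    apply Eq.symm
    conv_lhs => rw [hA x1 x0 (compl x2)]
    conv_lhs => rw [E51 (add x1 x0) x2]
    conv_lhs => rw [E56 (compl x2) x1 x0]
  have E54 : ∀ x0 x1 : A, (add x0 (add (compl x1) (compl x0))) = (add (compl x0) (add x0 (compl x1))) := by
    intro x0 x1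
    apply Eq.symm
    conv_lhs => rw [E55 (compl x0) x0 x1]
    conv_lhs => enter [2]; rw [E28 x0 x1]
  have E53 : ∀ x0 x1 : A, (add x0 (compl (compl (add (compl x0) x1)))) = (add (compl (compl (add (compl x0) x1))) x0) := by
    intro x0 x1
    conv_lhs => rw [← E14 x0 x1 (compl (compl (add (compl x0) x1)))]
    conv_lhs => rw [E54 (compl (add (compl x0) x1)) (add (compl x0) (compl x1))]
    conv_lhs => enter [2]; rw [hH x0 x1]
  have E4 : ∀ x0 x1 : A, (add x0 (compl (compl (add (compl x0) x1)))) = (add x0 (compl x0)) := by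
    intro x0 x1
    apply Eq.symm
    conv_lhs => rw [← E5 x0]
    conv_lhs => rw [← E38 (compl x0) (compl x1)]
    conv_lhs => rw [hA (compl x0) (compl x1) (compl (add (compl x0) (compl x1)))]
    conv_lhs => rw [← E40 (compl (add (compl x0) x1)) (add (compl x0) (compl x1))]
    conv_lhs => rw [E22 x0 x1 (compl (compl (add (compl x0) x1)))]
    conv_lhs => rw [← E53 x0 x1]
  have E58 : ∀ x0 x1 : A, (add x0 (add (compl x0) (compl x1))) = (add (compl x1) (add x0 (compl x0))) := by
    intro x0 x1
    apply Eq.symm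
    conv_lhs => rw [E55 (compl x1) x0 x0]
    conv_lhs => enter [2]; rw [E28 x1 x0]
  have E57 : ∀ x0 x1 : A, (add x0 (add (compl x0) (compl x1))) = (add (compl x1) (add (compl x0) x0)) := by
    intro x0 x1
    conv_lhs => rw [E58 x0 x1]
    conv_lhs => enter [2]; rw [hC x0 (compl x0)]
  have E61 : ∀ x0 x1 : A, (add x0 (add (compl x0) (compl x1))) = (add (compl x0) (add (compl x1) x0)) := by
    intro x0 x1
    conv_lhs => rw [E58 x0 x1]
    conv_lhs => rw [← E9 (compl x0) (compl x1) x0]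
  have E60 : ∀ x0 x1 : A, (add x0 (add (compl x0) x1)) = (add (compl x0) (add x1 x0)) := by
    intro x0 x1
    apply Eq.symm
    conv_lhs => enter [2,2]; rw [← hH x0 x1]
    conv_lhs => rw [hA (compl x0) x1 (add (compl (add (compl x0) x1)) (compl (add (compl x0) (compl x1))))]
    conv_lhs => rw [E61 (add (compl x0) x1) (add (compl x0) (compl x1))]
    conv_lhs => rw [E14 x0 x1 (add (compl x0) x1)]
  have E59 : ∀ x0 x1 : A, (add x0 (add (compl x0) x1)) = (add x0 (compl x0)) := by
    intro x0 x1
    apply Eq.symm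
    conv_lhs => rw [← E5 x0]
    conv_lhs => rw [← E38 (compl x0) (compl x1)]
    conv_lhs => rw [hA (compl x0) (compl x1) (compl (add (compl x0) (compl x1)))]
    conv_lhs => rw [← E40 (add (compl x0) x1) (add (compl x0) (compl x1))]
    conv_lhs => enter [2]; rw [hH x0 x1]
    conv_lhs => rw [← hA (compl x0) x1 x0]
    conv_lhs => rw [← E60 x0 x1]
  have E3 : ∀ x0 x1 : A, (add x0 (compl (compl (add x1 (compl x1))))) = (add x0 (compl x0)) := by
    intro x0 x1
    apply Eq.symm
    conv_lhs => rw [← E4 x0 (add (compl x1) x1)]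
    conv_lhs => enter [2,1,1]; rw [← E57 x1 x0]
    conv_lhs => enter [2,1,1]; rw [E59 x1 (compl x0)]
  have E2 : ∀ x0 x1 : A, (add x0 (compl (compl (add x1 (compl x1))))) = (add x1 (compl x1)) := by
    intro x0 x1
    conv_lhs => rw [E3 x0 x1]
    conv_lhs => rw [E6 x0 x1]
  have E66 : ∀ x0 : A, (add x0 (compl (add x0 (compl (compl x0))))) = (add x0 (compl (add (compl (compl x0)) x0))) := by
    intro x0
    apply Eq.symm
    conv_lhs => rw [← E17 (compl x0) x0]
    conv_lhs => rw [← E17 x0 (compl x0)]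
  have E65 : ∀ x0 : A, (add (compl x0) (compl (compl (compl x0)))) = (add (compl (compl (compl x0))) (compl x0)) := by
    intro x0
    apply Eq.symm
    conv_lhs => rw [← E10 (add (compl (compl (compl x0))) (compl x0)) x0]
    conv_lhs => enter [2,1]; rw [← E66 (compl x0)]
    conv_lhs => enter [1,1]; rw [← E31 x0 (compl (compl (compl x0)))]
    conv_lhs => rw [E37 x0 (add (compl x0) (compl (compl (compl x0))))]
  have E68 : ∀ x0 x1 : A, (add (compl (add (compl (compl x0)) (compl x1))) x0) = (add x1 (compl (add (compl x0) x1))) := by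
    intro x0 x1
    apply Eq.symm
    conv_lhs => rw [← E26 x1 x0]
    conv_lhs => enter [1,1]; rw [hC (compl x1) (compl (compl x0))]
  have E67 : ∀ x0 x1 : A, (add (compl (add (compl (compl x0)) (compl x1))) x0) = (add x0 (compl (add x0 (compl x1)))) := by
    intro x0 x1
    conv_lhs => rw [E68 x0 x1]
    conv_lhs => rw [← E17 x0 x1]
  have E70 : ∀ x0 x1 : A, (add x0 (compl (add (compl x0) (compl (compl x1))))) = (add (compl (add (compl x0) x1)) x0) := by
    intro x0 x1
    conv_lhs => rw [← E14 x0 x1 (compl (add (compl x0) (compl (compl x1))))]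
    conv_lhs => enter [2]; rw [hH x0 (compl x1)]
  have E69 : ∀ x0 x1 : A, (add x0 (compl (add (compl x0) (compl (compl x1))))) = (add x0 (compl (add (compl x0) x1))) := by
    intro x0 x1
    conv_lhs => rw [E70 x0 x1]
    conv_lhs => rw [← E32 x0 x1]
  have E64 : ∀ x0 : A, (add (compl x0) (compl (compl (compl x0)))) = (add (compl x0) (compl x0)) := by
    intro x0
    conv_lhs => rw [E65 x0]
    conv_lhs => rw [← E21 (add (compl (compl (compl x0))) (compl x0)) x0]
    conv_lhs => enter [1,1]; rw [E67 (compl x0) x0]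
    conv_lhs => enter [2,1]; rw [← E31 x0 (compl (compl (compl x0)))]
    conv_lhs => enter [2,1]; rw [E69 x0 (compl x0)]
    conv_lhs => rw [E19 x0 (add (compl x0) (compl x0))]
  have E63 : ∀ x0 x1 : A, (add (compl (add x0 (compl x0))) (compl (add (compl x1) (compl x1)))) = x1 := by
    intro x0 x1
    apply Eq.symm
    conv_lhs => rw [← hH x1 (compl (compl x1))]
    conv_lhs => enter [1,1]; rw [E6 (compl x1) x0]
    conv_lhs => enter [2,1]; rw [E64 x1]
  have E73 : ∀ x0 x1 : A, (add x0 (add x1 (compl x1))) = (add x1 (add (compl x1) x0)) := by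
    intro x0 x1
    apply Eq.symm
    conv_lhs => rw [E60 x1 x0]
    conv_lhs => rw [hC (compl x1) (add x0 x1)]
    conv_lhs => rw [← hA x0 x1 (compl x1)]
  have E72 : ∀ x0 x1 : A, (add x0 (add x1 (compl x1))) = (add x0 (add (compl x1) x1)) := by
    intro x0 x1
    conv_lhs => rw [E73 x0 x1]
    conv_lhs => rw [E56 x1 (compl x1) x0]
  have E71 : ∀ x0 x1 : A, (add x0 (add x1 (compl x1))) = (add x1 (compl x1)) := by
    intro x0 x1
    apply Eq.symm
    conv_lhs => rw [← E5 x1]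
    conv_lhs => rw [← E38 (compl x1) (compl x0)]
    conv_lhs => rw [hA (compl x1) (compl x0) (compl (add (compl x1) (compl x0)))]
    conv_lhs => rw [← E40 (add x0 (compl x1)) (add (compl x1) (compl x0))]
    conv_lhs => enter [2]; rw [E15 x0 x1]
    conv_lhs => rw [← hA x0 (compl x1) x1]
    conv_lhs => rw [← E72 x0 x1]
  have E62 : ∀ x0 x1 : A, (add (compl x0) (compl (add x1 (compl x1)))) = (add (compl x0) (compl x0)) := by
    intro x0 x1
    apply Eq.symm
    conv_lhs => rw [← E20 (add x1 (compl x1)) (add (compl x0) (compl x0))]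
    conv_lhs => enter [1,1]; rw [E63 x1 x0]
    conv_lhs => enter [2,1]; rw [E71 (compl (add (compl x0) (compl x0))) x1]
  have E74 : ∀ x0 x1 : A, (add (compl (add (compl x0) (compl x0))) (compl (add x1 (compl x1)))) = x0 := by
    intro x0 x1
    apply Eq.symm
    conv_lhs => rw [← hH x0 (compl x0)]
    conv_lhs => enter [2,1]; rw [E6 (compl x0) x1]
  have E1 : ∀ x0 x1 : A, (add x0 (compl (add x1 (compl x1)))) = x0 := by
    intro x0 x1
    conv_lhs => enter [2,1]; rw [← E2 x0 x1]
    conv_lhs => rw [E18 x0 (compl (add x1 (compl x1)))]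
    conv_lhs => enter [1,1]; rw [E62 x0 x1]
    conv_lhs => rw [E74 x0 x1]
  have E0 : ∀ x0 : A, (compl (compl x0)) = x0 := by
    intro x0
    apply Eq.symm
    conv_lhs => rw [← hH x0 (compl (add x0 (compl x0)))]
    conv_lhs => enter [1,1]; rw [E1 (compl x0) x0]
    conv_lhs => enter [2,1]; rw [E2 (compl x0) x0]
    conv_lhs => rw [E1 (compl (compl x0)) x0]
  have E76 : ∀ x0 : A, (compl (add x0 x0)) = (compl x0) := by
    intro x0
    apply Eq.symm
    conv_lhs => rw [← E74 (compl x0) x0]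
    conv_lhs => enter [1,1,1]; rw [E0 x0]
    conv_lhs => rw [E1 (compl (add x0 (compl (compl x0)))) x0]
    conv_lhs => enter [1,2]; rw [E0 x0]
  have E75 : ∀ x0 : A, (add x0 x0) = x0 := by
    intro x0
    conv_lhs => rw [← hH (add x0 x0) x0]
    conv_lhs => enter [1,1,1]; rw [E76 x0]
    conv_lhs => enter [2,1,1]; rw [E76 x0]
    conv_lhs => rw [hH x0 x0]
  have E79 : ∀ x0 x1 x2 : A, (add (compl (add (compl x0) (compl x1))) (add (compl (add (compl x0) x1)) x2)) = (add x0 x2) := by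
    intro x0 x1 x2
    conv_lhs => rw [hA (compl (add (compl x0) (compl x1))) (compl (add (compl x0) x1)) x2]
    conv_lhs => enter [1]; rw [E21 x0 x1]
  have E78 : ∀ x0 x1 : A, (add x0 (compl (add (compl x0) x1))) = x0 := by
    intro x0 x1
    conv_lhs => rw [← E79 x0 x1 (compl (add (compl x0) x1))]
    conv_lhs => enter [2]; rw [E75 (compl (add (compl x0) x1))]
    conv_lhs => rw [E21 x0 x1]
  have E77 : ∀ x0 x1 : A, (add (compl (add x0 x1)) (compl x0)) = (compl x0) := by
    intro x0 x1
    conv_lhs => enter [2]; rw [← E75 (compl x0)]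
    conv_lhs => enter [1,1,1]; rw [← E0 x0]
    conv_lhs => rw [E48 (compl (add (compl (compl x0)) x1)) x0]
    conv_lhs => enter [2]; rw [E78 (compl x0) x1]
    conv_lhs => rw [E75 (compl x0)]
  refine ⟨?_, ?_, ?_⟩
  · intro x
    conv_lhs => rw [E0 x]
  · intro x
    conv_lhs => rw [E75 x]
  · intro x y
    conv_lhs => rw [E77 x y]


/-- Tarski's axiom system (R1)-(R10) is equivalent to the system S consisting of
(R1)-(R6), both distributive laws (R8) and (R8'), and (R10); in particular (R7)
and (R9) are derivable from (R1)-(R6), (R8), (R8'), (R10). -/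
theorem tarski_iff_systemS {A : Type*} (add : A → A → A) (compl : A → A)
    (mul : A → A → A) (conv : A → A) (e : A) :
    ((∀ r s : A, add r s = add s r) ∧
     (∀ r s t : A, add r (add s t) = add (add r s) t) ∧
     (∀ r s : A, add (compl (add (compl r) s)) (compl (add (compl r) (compl s))) = r) ∧
     (∀ r s t : A, mul r (mul s t) = mul (mul r s) t) ∧
     (∀ r : A, mul r e = r) ∧
     (∀ r : A, conv (conv r) = r) ∧
     (∀ r s : A, conv (mul r s) = mul (conv s) (conv r)) ∧
     (∀ r s t : A, mul (add r s) t = add (mul r t) (mul s t)) ∧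
     (∀ r s : A, conv (add r s) = add (conv r) (conv s)) ∧
     (∀ r s : A, add (mul (conv r) (compl (mul r s))) (compl s) = compl s)) ↔
    ((∀ r s : A, add r s = add s r) ∧
     (∀ r s t : A, add r (add s t) = add (add r s) t) ∧
     (∀ r s : A, add (compl (add (compl r) s)) (compl (add (compl r) (compl s))) = r) ∧
     (∀ r s t : A, mul r (mul s t) = mul (mul r s) t) ∧
     (∀ r : A, mul r e = r) ∧
     (∀ r : A, conv (conv r) = r) ∧
     (∀ r s t : A, mul (add r s) t = add (mul r t) (mul s t)) ∧
     (∀ r s t : A, mul r (add s t) = add (mul r s) (mul r t)) ∧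
     (∀ r s : A, add (mul (conv r) (compl (mul r s))) (compl s) = compl s)) := by
  constructor
  · rintro ⟨hC, hA, hH, hM, hI, hCC, hR7, hR8, hR9, hR10⟩
    refine ⟨hC, hA, hH, hM, hI, hCC, hR8, ?_, hR10⟩
    intro r s t
    calc mul r (add s t) = conv (conv (mul r (add s t))) := (hCC _).symm
      _ = conv (mul (conv (add s t)) (conv r)) := by rw [hR7]
      _ = conv (mul (add (conv s) (conv t)) (conv r)) := by rw [hR9]
      _ = conv (add (mul (conv s) (conv r)) (mul (conv t) (conv r))) := by rw [hR8]
      _ = add (conv (mul (conv s) (conv r))) (conv (mul (conv t) (conv r))) := by rw [hR9]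
      _ = add (mul r s) (mul r t) := by rw [hR7, hR7, hCC, hCC, hCC]
  · rintro ⟨hC, hA, hH, hM, hI, hCC, hDl, hDr, hR10⟩
    -- Boolean facts
    obtain ⟨dne, idem, absorb⟩ := hunt_main add compl hC hA hH
    set le : A → A → Prop := fun a b => add a b = b with hle
    have le_refl : ∀ a, le a a := idem
    have le_trans : ∀ a b c, le a b → le b c → le a c := by
      intro a b c h1 h2
      show add a c = c
      rw [← h2, hA, h1]
    have antisymm : ∀ a b, le a b → le b a → a = b := by
      intro a b h1 h2
      calc a = add b a := h2.symm
        _ = add a b := hC _ _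
        _ = b := h1
    have le_add_left : ∀ a b, le a (add a b) := by
      intro a b; show add a (add a b) = add a b
      rw [hA, idem]
    have le_add_right : ∀ a b, le b (add a b) := by
      intro a b; show add b (add a b) = add a b
      rw [hC a b, hA, idem]
    have add_le : ∀ a b c, le a c → le b c → le (add a b) c := by
      intro a b c h1 h2; show add (add a b) c = c
      rw [← hA, h2, h1]
    have compl_anti : ∀ a b, le a b → le (compl b) (compl a) := by
      intro a b h
      have : compl b = compl (add a b) := by rw [h]
      rw [this]
      exact absorb a b
    have compl_inj : ∀ a b, compl a = compl b → a = b := by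
      intro a b h
      rw [← dne a, ← dne b, h]
    have swap : ∀ a b, le a (compl b) → le b (compl a) := by
      intro a b h
      have h2 := compl_anti _ _ h
      rwa [dne] at h2
    have ext : ∀ u v : A, (∀ x, le x u ↔ le x v) → u = v := by
      intro u v h
      exact antisymm _ _ ((h u).mp (le_refl u)) ((h v).mpr (le_refl v))
    have monoL : ∀ a b c, le a b → le (mul a c) (mul b c) := by
      intro a b c h
      show add (mul a c) (mul b c) = mul b c
      rw [← hDl, h]
    have monoR : ∀ a b c, le b c → le (mul a b) (mul a c) := by
      intro a b c h
      show add (mul a b) (mul a c) = mul a c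
      rw [← hDr, h]
    have r10 : ∀ r s, le (mul (conv r) (compl (mul r s))) (compl s) := hR10
    -- Peirce transposition
    have Pd : ∀ a b c, le (mul a b) (compl c) → le (mul (conv a) c) (compl b) := by
      intro a b c h
      have h1 : le c (compl (mul a b)) := swap _ _ h
      exact le_trans _ _ _ (monoR _ _ _ h1) (r10 a b)
    have P : ∀ a b c, le (mul a b) (compl c) ↔ le (mul (conv a) c) (compl b) := by
      intro a b c
      constructor
      · exact Pd a b c
      · intro h
        have h2 := Pd (conv a) c b h
        rwa [hCC] at h2
    -- E1 : le x (compl c) ↔ le (mul (conv x) c) (compl e)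
    have E1 : ∀ x c, le x (compl c) ↔ le (mul (conv x) c) (compl e) := by
      intro x c
      constructor
      · intro h
        exact Pd x e c (by rwa [hI])
      · intro h
        have h2 := Pd (conv x) c e h
        rw [hCC, hI] at h2
        exact h2
    -- E1' : le (conv x) (compl c) ↔ le (mul x c) (compl e)
    have E1' : ∀ x c, le (conv x) (compl c) ↔ le (mul x c) (compl e) := by
      intro x c
      have h := E1 (conv x) c
      rwa [hCC] at h
    -- T : le (conv (mul x y)) (compl c) ↔ le (conv x) (compl (mul y c))
    have T : ∀ x y c, le (conv (mul x y)) (compl c) ↔ le (conv x) (compl (mul y c)) := by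
      intro x y c
      rw [E1' (mul x y) c, E1' x (mul y c), ← hM]
    -- R7
    have R7 : ∀ r s, conv (mul r s) = mul (conv s) (conv r) := by
      intro y c
      apply compl_inj
      apply ext
      intro x
      constructor
      · intro h
        have h1 : le (conv (mul y c)) (compl x) := swap _ _ h
        have h2 : le (conv y) (compl (mul c x)) := (T y c x).mp h1
        have h3 : le (mul c x) (compl (conv y)) := swap _ _ h2
        have h4 : le (mul (conv c) (conv y)) (compl x) := Pd c x (conv y) h3
        exact swap _ _ h4
      · intro h
        have h4 : le (mul (conv c) (conv y)) (compl x) := swap _ _ h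
        have h3 : le (mul c x) (compl (conv y)) := by
          have := Pd (conv c) (conv y) x h4
          rwa [hCC] at this
        have h2 : le (conv y) (compl (mul c x)) := swap _ _ h3
        have h1 : le (conv (mul y c)) (compl x) := (T y c x).mpr h2
        exact swap _ _ h1
    -- R9
    have R9 : ∀ r s, conv (add r s) = add (conv r) (conv s) := by
      intro y c
      apply compl_inj
      apply ext
      intro x
      have split : le (add (mul y x) (mul c x)) (compl e) ↔
          le (mul y x) (compl e) ∧ le (mul c x) (compl e) := by
        constructor
        · intro h
          exact ⟨le_trans _ _ _ (le_add_left _ _) h, le_trans _ _ _ (le_add_right _ _) h⟩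
        · intro ⟨h1, h2⟩
          exact add_le _ _ _ h1 h2
      constructor
      · intro h
        have h1 : le (conv (add y c)) (compl x) := swap _ _ h
        have h2 : le (mul (add y c) x) (compl e) := (E1' _ _).mp h1
        rw [hDl] at h2
        obtain ⟨h3, h4⟩ := split.mp h2
        have h5 : le (conv y) (compl x) := (E1' _ _).mpr h3
        have h6 : le (conv c) (compl x) := (E1' _ _).mpr h4
        exact swap _ _ (add_le _ _ _ h5 h6)
      · intro h
        have h1 : le (add (conv y) (conv c)) (compl x) := swap _ _ h
        have h5 : le (conv y) (compl x) := le_trans _ _ _ (le_add_left _ _) h1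
        have h6 : le (conv c) (compl x) := le_trans _ _ _ (le_add_right _ _) h1
        have h2 : le (mul (add y c) x) (compl e) := by
          rw [hDl]
          exact split.mpr ⟨(E1' _ _).mp h5, (E1' _ _).mp h6⟩
        have h7 : le (conv (add y c)) (compl x) := (E1' _ _).mpr h2
        exact swap _ _ h7
    exact ⟨hC, hA, hH, hM, hI, hCC, R7, hDl, R9, hR10⟩
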